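/- For every ordinal ρ < ω₂, there exist disjoint sets A, B ⊆ ρ such that for every ordinal β ≤ ρ of uncountable cofinality, both A ∩ β and B ∩ β are stationary in β. -/

import Mathlib

open Ordinal

def IsClosedIn (C : Set Ordinal) (β : Ordinal) : Prop :=
  ∀ a < β, (C ∩ Set.Iio a).Nonempty → sSup (C ∩ Set.Iio a) = a → a ∈ C

def IsUnboundedIn (C : Set Ordinal) (β : Ordinal) : Prop :=
  ∀ a < β, ∃ c ∈ C, c < β ∧ a < c

def IsClubIn (C : Set Ordinal) (β : Ordinal) : Prop :=
  IsClosedIn C β ∧ IsUnboundedIn C β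

def IsStationaryIn (S : Set Ordinal) (β : Ordinal) : Prop :=
  ∀ C : Set Ordinal, C ⊆ Set.Iio β → IsClubIn C β → (S ∩ C).Nonempty

open Set Cardinal

/-- closure helper: a limit of points of a closed set is in it. -/
lemma mem_of_closed {C : Set Ordinal} {β x : Ordinal} (hC : IsClosedIn C β)
    (hx : x < β) {T : Set Ordinal} (hT : T ⊆ C ∩ Set.Iio x) (hne : T.Nonempty)
    (hsup : sSup T = x) : x ∈ C := by
  apply hC x hx ⟨hne.choose, hT hne.choose_spec⟩
  apply le_antisymm
  · exact csSup_le (hne.mono hT) (fun y hy => hy.2.le)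
  · calc x = sSup T := hsup.symm
      _ ≤ _ := csSup_le_csSup (Ordinal.bddAbove_of_small) hne hT

/-- intersecting a club with a final segment -/
lemma club_inter_Ioi {C : Set Ordinal} {β α : Ordinal} (hα : α < β)
    (hC : IsClubIn C β) : IsClubIn (C ∩ Set.Ioi α) β := by
  constructor
  · intro a ha hne hsup
    have hsub : C ∩ Set.Ioi α ∩ Set.Iio a ⊆ C ∩ Set.Iio a := fun y hy => ⟨hy.1.1, hy.2⟩
    have haC : a ∈ C := mem_of_closed hC.1 ha hsub hne hsup
    obtain ⟨y, hy⟩ := hne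
    exact ⟨haC, (lt_trans hy.1.2 hy.2 : α < a)⟩
  · intro a ha
    obtain ⟨c, hcC, hcβ, hac⟩ := hC.2 (max a α) (max_lt ha hα)
    exact ⟨c, ⟨hcC, (le_max_right a α).trans_lt hac⟩, hcβ, (le_max_left a α).trans_lt hac⟩

lemma stationary_inter_Ioi {S : Set Ordinal} {β α : Ordinal} (hα : α < β)
    (hS : IsStationaryIn S β) : IsStationaryIn (S ∩ Set.Ioi α) β := by
  intro C hCsub hC
  obtain ⟨x, hxS, hxC⟩ := hS (C ∩ Set.Ioi α) (fun y hy => hCsub hy.1) (club_inter_Ioi hα hC)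
  exact ⟨x, ⟨hxS, hxC.2⟩, hxC.1⟩

/-- countable intersections of clubs in ω₁ are clubs -/
lemma iInter_club (Cs : ℕ → Set Ordinal) (hsub : ∀ n, Cs n ⊆ Set.Iio (ω_ 1))
    (hclub : ∀ n, IsClubIn (Cs n) (ω_ 1)) : IsClubIn (⋂ n, Cs n) (ω_ 1) := by
  have hlim : Order.IsSuccLimit (ω_ 1) := isSuccLimit_omega 1
  constructor
  · intro a ha hne hsup
    refine Set.mem_iInter.2 fun n => mem_of_closed (hclub n).1 ha
      (fun y hy => ⟨(Set.mem_iInter.1 hy.1) n, hy.2⟩) hne hsup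
  · intro a ha
    -- next b : an element of every C n above b
    have hch : ∀ b < ω_ 1, ∀ n : ℕ, ∃ c, c ∈ Cs n ∧ c < ω_ 1 ∧ b < c := by
      intro b hb n; exact (hclub n).2 b hb
    choose nxt hnxt1 hnxt2 hnxt3 using hch
    -- step
    have hstep : ∀ b (hb : b < ω_ 1), (⨆ n, nxt b hb n) + 1 < ω_ 1 := by
      intro b hb
      rw [← Order.succ_eq_add_one]
      exact hlim.succ_lt (by
        exact Ordinal.iSup_lt_omega_one (fun n => by exact hnxt2 b hb n))
    -- the sequence
    let x : ℕ → {b : Ordinal // b < ω_ 1} := fun k => Nat.rec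
      ⟨a + 1, by rw [← Order.succ_eq_add_one]; exact hlim.succ_lt ha⟩
      (fun _ p => ⟨(⨆ n, nxt p.1 p.2 n) + 1, hstep p.1 p.2⟩) k
    have hxlt : ∀ k n, nxt (x k).1 (x k).2 n < (x (k+1)).1 := by
      intro k n
      have : nxt (x k).1 (x k).2 n ≤ ⨆ n, nxt (x k).1 (x k).2 n :=
        le_ciSup (Ordinal.bddAbove_range _) n
      exact this.trans_lt (lt_add_one _)
    have hxmono : ∀ k, (x k).1 < (x (k+1)).1 := fun k => (hnxt3 _ _ 0).trans (hxlt k 0)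
    set xs : Ordinal := ⨆ k, (x k).1 with hxs
    have hxsup_lt : xs < ω_ 1 := by
      exact Ordinal.iSup_lt_omega_one (fun k => by exact (x k).2)
    have hxle : ∀ k, (x k).1 ≤ xs := fun k => le_ciSup (Ordinal.bddAbove_range _) k
    have hmem : ∀ n, xs ∈ Cs n := by
      intro n
      refine mem_of_closed (hclub n).1 hxsup_lt
        (T := Set.range (fun k => nxt (x k).1 (x k).2 n)) ?_ ⟨_, ⟨0, rfl⟩⟩ ?_
      · rintro y ⟨k, rfl⟩
        exact ⟨hnxt1 _ _ n, (hxlt k n).trans_le (hxle (k+1))⟩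
      · apply le_antisymm
        · exact csSup_le ⟨_, ⟨0, rfl⟩⟩ (by rintro y ⟨k, rfl⟩; exact ((hxlt k n).trans_le (hxle (k+1))).le)
        · rw [hxs]
          refine Ordinal.iSup_le_iff.2 fun k => ?_
          exact ((hnxt3 (x k).1 (x k).2 n).le).trans (le_csSup (Ordinal.bddAbove_of_small) ⟨k, rfl⟩)
    exact ⟨xs, Set.mem_iInter.2 hmem, hxsup_lt, (lt_add_one a).trans_le (hxle 0)⟩

/-- There exist two disjoint stationary subsets of ω₁. -/
lemma exists_disjoint_stationary_omega1 :
    ∃ S₀ S₁ : Set Ordinal, S₀ ⊆ Set.Iio (ω_ 1) ∧ S₁ ⊆ Set.Iio (ω_ 1) ∧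
      Disjoint S₀ S₁ ∧ IsStationaryIn S₀ (ω_ 1) ∧ IsStationaryIn S₁ (ω_ 1) := by
  classical
  -- injections from initial segments into ℕ
  have hcnt : ∀ α : Ordinal, α < ω_ 1 → ∃ f : Ordinal → ℕ, Set.InjOn f (Set.Iio α) := by
    intro α hα
    have hc : α.card ≤ ℵ₀ := by
      rw [← ord_aleph, Cardinal.lt_ord] at hα
      rwa [← Cardinal.succ_aleph0, Order.lt_succ_iff] at hα
    have : Countable ↥(Set.Iio α) := by
      have : Countable α.ToType := by rw [← mk_le_aleph0_iff, mk_toType]; exact hc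
      exact Countable.of_equiv _ (ToType.mk (o := α)).toEquiv.symm
    obtain ⟨g, hg⟩ := exists_injective_nat ↥(Set.Iio α)
    refine ⟨fun x => if h : x < α then g ⟨x, h⟩ else 0, ?_⟩
    intro x hx y hy hxy
    simp only [Set.mem_Iio] at hx hy
    simp only [dif_pos hx, dif_pos hy] at hxy
    exact Subtype.mk_eq_mk.1 (hg hxy)
  choose e he using hcnt
  -- the Ulam sets
  let A : ℕ → ∀ b < ω_ 1, Set Ordinal := fun n b _ =>
    {α | ∃ h : α < ω_ 1, b < α ∧ e α h b = n}
  have hAsub : ∀ n b hb, A n b hb ⊆ Set.Iio (ω_ 1) := by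
    rintro n b hb α ⟨h, _⟩; exact h
  -- step 1 : some column is stationary
  have step1 : ∀ b (hb : b < ω_ 1), ∃ n, IsStationaryIn (A n b hb) (ω_ 1) := by
    intro b hb
    by_contra hcon
    push_neg at hcon
    simp only [IsStationaryIn, not_forall] at hcon
    choose Cs hCs1 hCs2 hCs3 using hcon
    have hclub := iInter_club Cs hCs1 hCs2
    obtain ⟨α, hαC, hα1, hbα⟩ := hclub.2 b hb
    have : α ∈ A (e α hα1 b) b hb := ⟨hα1, hbα, rfl⟩
    exact hCs3 (e α hα1 b) ⟨α, this, Set.mem_iInter.1 hαC _⟩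
  choose N hN using step1
  -- step 2 : pigeonhole
  let N' : (ω_ 1).ToType → ℕ := fun x =>
    N ((ToType.mk (o := ω_ 1)).symm x).1 ((ToType.mk (o := ω_ 1)).symm x).2
  have hninj : ¬ Function.Injective N' := by
    intro hinj
    have : Countable (ω_ 1).ToType := hinj.comp (fun _ _ h => h) |>.countable  -- ?
    rw [← mk_le_aleph0_iff, mk_toType, card_omega] at this
    exact absurd this (not_le.2 aleph0_lt_aleph_one)
  obtain ⟨x₁, x₂, heq, hne⟩ := Function.not_injective_iff.1 hninj
  set b₁ := ((ToType.mk (o := ω_ 1)).symm x₁) with hb₁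
  set b₂ := ((ToType.mk (o := ω_ 1)).symm x₂) with hb₂
  have hNeq : N b₁.1 b₁.2 = N b₂.1 b₂.2 := heq
  refine ⟨A (N b₁.1 b₁.2) b₁.1 b₁.2, A (N b₂.1 b₂.2) b₂.1 b₂.2,
    hAsub _ _ b₁.2, hAsub _ _ b₂.2, ?_, hN b₁.1 b₁.2, hN b₂.1 b₂.2⟩
  rw [Set.disjoint_left]
  rintro α ⟨h, hb₁α, he₁⟩ ⟨h', hb₂α, he₂⟩
  have hb12 : b₁.1 = b₂.1 := by
    apply he α h hb₁α hb₂α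
    rw [he₁, he₂, hNeq]
  exact hne ((ToType.mk (o := ω_ 1)).symm.injective.eq_iff.1 (Subtype.ext hb12) |>.symm ▸ rfl)

/-- For every ordinal ρ < ω₂ there exist disjoint sets A, B ⊆ ρ such that for every
β ≤ ρ of uncountable cofinality, both A ∩ β and B ∩ β are stationary in β. -/
theorem exists_disjoint_reflecting_everywhere (ρ : Ordinal) (hρ : ρ < ω_ 2) :
    ∃ A B : Set Ordinal, A ⊆ Set.Iio ρ ∧ B ⊆ Set.Iio ρ ∧ Disjoint A B ∧
      ∀ β ≤ ρ, Cardinal.aleph0 < β.cof →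
        IsStationaryIn A β ∧ IsStationaryIn B β := by
  revert hρ
  induction ρ using Ordinal.induction with
  | _ ρ IH =>
  intro hρ
  rcases Ordinal.zero_or_succ_or_isSuccLimit ρ with rfl | ⟨ρ', rfl⟩ | hlim
  · refine ⟨∅, ∅, by simp, by simp, disjoint_bot_left, fun β hβ hcof => absurd hcof ?_⟩
    rw [nonpos_iff_eq_zero.1 hβ, Ordinal.cof_zero]
    exact not_lt.2 (zero_le (a := ℵ₀))
  · obtain ⟨A, B, hA, hB, hAB, hst⟩ :=
      IH ρ' (Order.lt_succ ρ') ((Order.lt_succ ρ').trans hρ)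
    refine ⟨A, B, hA.trans (Set.Iio_subset_Iio (Order.le_succ ρ')),
      hB.trans (Set.Iio_subset_Iio (Order.le_succ ρ')), hAB, fun β hβ hcof => ?_⟩
    have hβ' : β ≤ ρ' := by
      rcases eq_or_lt_of_le hβ with rfl | h
      · rw [Ordinal.cof_succ] at hcof
        exact absurd hcof (not_lt.2 Cardinal.one_lt_aleph0.le)
      · exact Order.lt_succ_iff.1 h
    exact hst β hβ' hcof
  · -- limit case
    set δ := ρ.cof.ord with hδdef
    have hδlim : Order.IsSuccLimit δ := Cardinal.isSuccLimit_ord (aleph0_le_cof.2 hlim)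
    have hcard : ρ.card ≤ ℵ₁ := by
      have h2 : ρ.card < ℵ_ 2 := Cardinal.lt_ord.1 (by rw [ord_aleph]; exact hρ)
      rwa [show (2 : Ordinal) = Order.succ 1 by rw [← add_one_eq_succ]; exact one_add_one_eq_two.symm, Cardinal.aleph_succ,
        Order.lt_succ_iff] at h2
    have hcofle : ρ.cof ≤ ℵ₁ := (Ordinal.cof_le_card ρ).trans hcard
    have hδle : δ ≤ ω_ 1 := by
      rw [hδdef, ← ord_aleph]
      exact Cardinal.ord_le_ord.2 hcofle
    obtain ⟨f, hf⟩ := Ordinal.exists_fundamental_sequence ρ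
    set F : Ordinal → Ordinal := fun ξ => if h : ξ < δ then f ξ h else ρ with hFdef
    set g : Ordinal → Ordinal := fun ξ => sSup ((fun η => F η + 1) '' Set.Iio ξ) with hgdef
    have hFeq : ∀ ξ (h : ξ < δ), F ξ = f ξ h := fun ξ h => dif_pos h
    have hFlt : ∀ ξ, ξ < δ → F ξ < ρ := fun ξ h => by rw [hFeq ξ h]; exact hf.lt h
    have hFle_g : ∀ η ξ, η < ξ → F η + 1 ≤ g ξ := fun η ξ h =>
      le_csSup (Ordinal.bddAbove_of_small) ⟨η, h, rfl⟩
    have hgleF : ∀ ξ, ξ < δ → g ξ ≤ F ξ := by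
      intro ξ h
      apply csSup_le'
      rintro x ⟨η, hη, rfl⟩
      have hηδ : η < δ := lt_trans hη h
      show F η + 1 ≤ F ξ
      rw [add_one_eq_succ, Order.succ_le_iff, hFeq η hηδ, hFeq ξ h]
      exact hf.strict_mono _ _ hη
    have hglt : ∀ ξ, ξ < δ → g ξ < ρ := fun ξ h => (hgleF ξ h).trans_lt (hFlt ξ h)
    have hgmono : Monotone g := by
      intro ξ ζ hle
      apply csSup_le'
      rintro x ⟨η, hη, rfl⟩
      exact le_csSup (Ordinal.bddAbove_of_small) ⟨η, lt_of_lt_of_le hη hle, rfl⟩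
    have hgstrict : ∀ η ξ, η < ξ → η < δ → g η < g ξ :=
      fun η ξ h hηδ => (hgleF η hηδ).trans_lt ((lt_add_one _).trans_le (hFle_g η ξ h))
    have hg0 : g 0 = 0 := by
      have he : Set.Iio (0 : Ordinal) = ∅ := by
        ext x; simp [not_lt_zero]
      show sSup ((fun η => F η + 1) '' Set.Iio 0) = 0
      rw [he, Set.image_empty, csSup_empty]
      rfl
    have hcof : ∀ b, b < ρ → ∃ ξ, ξ < δ ∧ b < g ξ := by
      intro b hb
      have hb' : b < Ordinal.blsub δ f := by rw [hf.blsub_eq]; exact hb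
      obtain ⟨η, hη, hbf⟩ := Ordinal.lt_blsub_iff.1 hb'
      refine ⟨η + 1, by rw [add_one_eq_succ]; exact hδlim.succ_lt hη, ?_⟩
      calc b ≤ f η hη := hbf
        _ < F η + 1 := by rw [hFeq η hη]; exact lt_add_one _
        _ ≤ g (η + 1) := hFle_g η _ (lt_add_one η)
    obtain ⟨S₀, S₁, hS₀sub, hS₁sub, hS01, hS₀st, hS₁st⟩ := exists_disjoint_stationary_omega1
    have hIH : ∀ ξ, ξ < δ → ∃ A B : Set Ordinal, A ⊆ Set.Iio (g ξ) ∧ B ⊆ Set.Iio (g ξ) ∧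
        Disjoint A B ∧ ∀ β ≤ g ξ, ℵ₀ < β.cof →
          IsStationaryIn A β ∧ IsStationaryIn B β :=
      fun ξ hξ => IH (g ξ) (hglt ξ hξ) ((hglt ξ hξ).trans hρ)
    choose Aa Bb hAsub hBsub hABdisj hABst using hIH
    let Big : Set Ordinal → (∀ ξ, ξ < δ → Set Ordinal) → Set Ordinal := fun S W =>
      {x | (∃ ξ, ∃ _ : ξ < δ, ξ ∈ S ∧ x = g ξ) ∨
           (∃ ξ, ∃ h : ξ + 1 < δ, x ∈ W (ξ + 1) h ∧ g ξ < x)}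
    have hBigsub : ∀ S (W : ∀ ξ, ξ < δ → Set Ordinal),
        (∀ ξ h, W ξ h ⊆ Set.Iio (g ξ)) → Big S W ⊆ Set.Iio ρ := by
      rintro S W hW x (⟨ξ, hξ, _, rfl⟩ | ⟨ξ, h, hxW, _⟩)
      · exact hglt ξ hξ
      · exact lt_trans (hW _ h hxW) (hglt _ h)
    -- disjointness
    have hdisj : Disjoint (Big S₀ Aa) (Big S₁ Bb) := by
      rw [Set.disjoint_left]
      have hlt_succ : ∀ {ξ η : Ordinal}, g η < g ξ → g ξ < g (η + 1) → False := by
        intro ξ η h1 h2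
        have hξη : η < ξ := by
          by_contra hc; push_neg at hc; exact absurd h1 (not_lt.2 (hgmono hc))
        have hc2 : ξ < η + 1 := by
          by_contra hc; push_neg at hc; exact absurd h2 (not_lt.2 (hgmono hc))
        rw [add_one_eq_succ, Order.lt_succ_iff] at hc2
        exact absurd hξη (not_lt.2 hc2)
      rintro x (⟨ξ, hξ, hξS, rfl⟩ | ⟨ξ, hξ, hxA, hgx⟩) hB
      · rcases hB with ⟨η, hη, hηS, hEq⟩ | ⟨η, hη, hxB, hgxB⟩
        · have hξη : ξ = η := by
            rcases lt_trichotomy ξ η with h | h | h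
            · exact absurd hEq.symm (ne_of_gt (hgstrict ξ η h hξ))
            · exact h
            · exact absurd hEq (ne_of_gt (hgstrict η ξ h hη))
          exact Set.disjoint_left.1 hS01 hξS (hξη ▸ hηS)
        · exact hlt_succ hgxB (hBsub _ hη hxB)
      · rcases hB with ⟨η, hη, hηS, hEq⟩ | ⟨η, hη, hxB, hgxB⟩
        · exact hlt_succ (hEq ▸ hgx) (hEq ▸ hAsub _ hξ hxA)
        · rcases lt_trichotomy ξ η with h | rfl | h
          · have : x < g η := lt_of_lt_of_le (hAsub _ hξ hxA)
              (hgmono (by rw [add_one_eq_succ]; exact Order.succ_le_of_lt h))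
            exact absurd hgxB (not_lt.2 this.le)
          · exact Set.disjoint_left.1 (hABdisj _ hξ) hxA hxB
          · have : x < g ξ := lt_of_lt_of_le (hBsub _ hη hxB)
              (hgmono (by rw [add_one_eq_succ]; exact Order.succ_le_of_lt h))
            exact absurd hgx (not_lt.2 this.le)
    -- the main stationarity claim
    have hstat : ∀ (S : Set Ordinal) (W : ∀ ξ, ξ < δ → Set Ordinal),
        S ⊆ Set.Iio (ω_ 1) → IsStationaryIn S (ω_ 1) →
        (∀ ξ h, W ξ h ⊆ Set.Iio (g ξ)) →
        (∀ ξ h, ∀ β' ≤ g ξ, ℵ₀ < β'.cof → IsStationaryIn (W ξ h) β') →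
        ∀ β, β ≤ ρ → ℵ₀ < β.cof → IsStationaryIn (Big S W) β := by
      intro S W hSsub hSst hW1 hW2 β hβρ hβcof C hCsub hC
      rcases eq_or_lt_of_le hβρ with rfl | hβlt
      · -- β = ρ
        have hδeq : δ = ω_ 1 := by
          have h1 : β.cof = ℵ₁ := le_antisymm hcofle
            (by rw [← Cardinal.succ_aleph0]; exact Order.succ_le_of_lt hβcof)
          rw [hδdef, h1, ord_aleph]
        set D : Set Ordinal := {ξ | ξ < ω_ 1 ∧ g ξ ∈ C} with hDdef
        have hDclosed : IsClosedIn D (ω_ 1) := by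
          intro a ha hne hsup
          have halim : Order.IsSuccLimit a := by
            rcases Ordinal.zero_or_succ_or_isSuccLimit a with rfl | ⟨b, rfl⟩ | h
            · obtain ⟨y, hy⟩ := hne; exact absurd hy.2 (by simp)
            · exfalso
              have : sSup (D ∩ Set.Iio (Order.succ b)) ≤ b :=
                csSup_le hne (fun y hy => Order.lt_succ_iff.1 hy.2)
              rw [hsup] at this
              exact absurd this (not_le.2 (Order.lt_succ b))
            · exact h
          have haδ : a < δ := by rw [hδeq]; exact ha
          have hgaC : g a ∈ C := by
            refine mem_of_closed hC.1 (hglt a haδ) (T := g '' (D ∩ Set.Iio a)) ?_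
              (hne.image g) ?_
            · rintro y ⟨ξ, hξ, rfl⟩
              exact ⟨hξ.1.2, hgstrict ξ a hξ.2 (lt_trans hξ.2 haδ)⟩
            · apply le_antisymm
              · exact csSup_le (hne.image g)
                  (by rintro y ⟨ξ, hξ, rfl⟩; exact (hgstrict ξ a hξ.2 (lt_trans hξ.2 haδ)).le)
              · apply csSup_le'
                rintro y ⟨η, hη, rfl⟩
                obtain ⟨ξ, hξ, hηξ⟩ := exists_lt_of_lt_csSup hne (hsup ▸ hη)
                calc F η + 1 ≤ g ξ := hFle_g η ξ hηξ
                  _ ≤ sSup (g '' (D ∩ Set.Iio a)) :=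
                    le_csSup (Ordinal.bddAbove_of_small) ⟨ξ, hξ, rfl⟩
          exact ⟨ha, hgaC⟩
        have hDunb : IsUnboundedIn D (ω_ 1) := by
          intro a ha
          have hω₁lim : Order.IsSuccLimit (ω_ 1) := isSuccLimit_omega 1
          -- step function
          have hstep : ∀ b, b < ω_ 1 → ∃ p : Ordinal × Ordinal,
              p.1 ∈ C ∧ g b < p.1 ∧ p.2 < ω_ 1 ∧ b < p.2 ∧ p.1 < g p.2 := by
            intro b hb
            obtain ⟨c, hcC, hcβ, hgc⟩ := hC.2 (g b) (hglt b (by rw [hδeq]; exact hb))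
            obtain ⟨ζ, hζδ, hcgζ⟩ := hcof c hcβ
            refine ⟨(c, max ζ (b + 1)), hcC, hgc, ?_, ?_, ?_⟩
            · refine max_lt (hδeq ▸ hζδ) ?_
              rw [add_one_eq_succ]
              exact hω₁lim.succ_lt hb
            · exact lt_of_lt_of_le (lt_add_one b) (le_max_right _ _)
            · exact lt_of_lt_of_le hcgζ (hgmono (le_max_left _ _))
          choose step hstep1 hstep2 hstep3 hstep4 hstep5 using hstep
          let x : ℕ → {b : Ordinal // b < ω_ 1} := fun k => Nat.rec
            ⟨a + 1, by rw [add_one_eq_succ]; exact hω₁lim.succ_lt ha⟩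
            (fun _ p => ⟨(step p.1 p.2).2, hstep3 p.1 p.2⟩) k
          have hxmono : ∀ k, (x k).1 < (x (k + 1)).1 := fun k => hstep4 (x k).1 (x k).2
          set xs := ⨆ k, (x k).1 with hxsdef
          have hxs1 : xs < ω_ 1 := by
            exact Ordinal.iSup_lt_omega_one (fun k => by exact (x k).2)
          have hxle : ∀ k, (x k).1 ≤ xs := fun k => le_ciSup (Ordinal.bddAbove_range _) k
          have hgxs : g xs ∈ C := by
            refine mem_of_closed hC.1 (hglt xs (by rw [hδeq]; exact hxs1))
              (T := Set.range (fun k => (step (x k).1 (x k).2).1)) ?_ (Set.range_nonempty _) ?_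
            · rintro y ⟨k, rfl⟩
              refine ⟨hstep1 _ _, ?_⟩
              have h1 : (step (x k).1 (x k).2).1 < g (x (k+1)).1 := hstep5 (x k).1 (x k).2
              exact lt_of_lt_of_le h1 (hgmono (hxle (k+1)))
            · apply le_antisymm
              · apply csSup_le (Set.range_nonempty _)
                rintro y ⟨k, rfl⟩
                exact (lt_of_lt_of_le (show (step (x k).1 (x k).2).1 < g (x (k+1)).1 from hstep5 (x k).1 (x k).2) (hgmono (hxle (k+1)))).le
              · apply csSup_le'
                rintro y ⟨η, hη, rfl⟩
                have hex : ∃ k, η < (x k).1 := by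
                  by_contra hc; push_neg at hc
                  exact absurd (show xs ≤ η from ciSup_le hc) (not_le.2 hη)
                obtain ⟨k, hk⟩ := hex
                show F η + 1 ≤ _
                calc F η + 1 ≤ g (x k).1 := hFle_g _ _ hk
                  _ ≤ (step (x k).1 (x k).2).1 := (hstep2 _ _).le
                  _ ≤ sSup (Set.range (fun k => (step (x k).1 (x k).2).1)) :=
                    le_csSup (Ordinal.bddAbove_of_small) ⟨k, rfl⟩
          exact ⟨xs, ⟨hxs1, hgxs⟩, hxs1, (lt_add_one a).trans_le (hxle 0)⟩
        obtain ⟨ξ, hξS, hξD⟩ := hSst D (fun y hy => hy.1) ⟨hDclosed, hDunb⟩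
        exact ⟨g ξ, Or.inl ⟨ξ, by rw [hδeq]; exact hξD.1, hξS, rfl⟩, hξD.2⟩
      · -- β < ρ
        have hβ0 : β ≠ 0 := by
          rintro rfl
          rw [Ordinal.cof_zero] at hβcof
          exact absurd hβcof (by simp)
        obtain ⟨ξw, hξwδ, hξwβ⟩ := hcof β hβlt
        set T : Set Ordinal := {ξ | β ≤ g ξ} with hTdef
        have hTne : T.Nonempty := ⟨ξw, hξwβ.le⟩
        set ξ₀ := sInf T with hξ₀def
        have hξ₀T : β ≤ g ξ₀ := csInf_mem hTne
        have hmin : ∀ η, η < ξ₀ → g η < β := by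
          intro η h
          have := notMem_of_lt_csInf h (OrderBot.bddBelow _)
          exact not_le.1 this
        have hξ₀δ : ξ₀ < δ := lt_of_le_of_lt (csInf_le (OrderBot.bddBelow _) hξwβ.le) hξwδ
        rcases Ordinal.zero_or_succ_or_isSuccLimit ξ₀ with h0 | ⟨η₀, hsucc⟩ | hlim₀
        · exfalso
          rw [h0, hg0, nonpos_iff_eq_zero] at hξ₀T
          exact hβ0 hξ₀T
        · have hη₀δ : η₀ + 1 < δ := by rw [add_one_eq_succ, hsucc]; exact hξ₀δ
          have hgη₀β : g η₀ < β := hmin η₀ (by rw [← hsucc]; exact Order.lt_succ η₀)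
          have hβle : β ≤ g (η₀ + 1) := by rw [add_one_eq_succ, hsucc]; exact hξ₀T
          obtain ⟨x, hxW, hxC⟩ := hW2 (η₀ + 1) hη₀δ β hβle hβcof (C ∩ Set.Ioi (g η₀))
            (fun y hy => hCsub hy.1) (club_inter_Ioi hgη₀β hC)
          exact ⟨x, Or.inr ⟨η₀, hη₀δ, hxW, hxC.2⟩, hxC.1⟩
        · exfalso
          have hgeq : g ξ₀ = β := by
            refine le_antisymm (csSup_le' ?_) hξ₀T
            rintro y ⟨η, hη, rfl⟩
            have hsuc : η + 1 < ξ₀ := by rw [add_one_eq_succ]; exact hlim₀.succ_lt hη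
            exact (hFle_g η (η+1) (lt_add_one η)).trans (hmin _ hsuc).le
          -- cof β ≤ ℵ₀
          have hcnt : ξ₀.card ≤ ℵ₀ := by
            have : ξ₀ < ω_ 1 := lt_of_lt_of_le hξ₀δ hδle
            rw [← ord_aleph, Cardinal.lt_ord] at this
            rwa [← Cardinal.succ_aleph0, Order.lt_succ_iff] at this
          set h : ξ₀.ToType → Ordinal := fun i => F ((ToType.mk (o := ξ₀)).symm i).1 + 1 with hhdef
          have hrange : Set.range h = (fun η => F η + 1) '' Set.Iio ξ₀ := by
            ext y
            constructor
            · rintro ⟨i, rfl⟩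
              exact ⟨((ToType.mk (o := ξ₀)).symm i).1, ((ToType.mk (o := ξ₀)).symm i).2, rfl⟩
            · rintro ⟨η, hη, rfl⟩
              exact ⟨(ToType.mk (o := ξ₀)) ⟨η, hη⟩, by rw [hhdef]; simp⟩
          have hisup : iSup h = β := by
            rw [← hgeq, hgdef]
            show sSup (Set.range h) = _
            rw [hrange]
          have hcofle' : β.cof ≤ ℵ₀ := by
            have hH : ∀ i, h i < iSup h := by
              intro i
              rw [hisup, ← hgeq]
              have hηξ : ((ToType.mk (o := ξ₀)).symm i).1 < ξ₀ := ((ToType.mk (o := ξ₀)).symm i).2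
              have hsuc : ((ToType.mk (o := ξ₀)).symm i).1 + 1 < ξ₀ := by
                rw [add_one_eq_succ]; exact hlim₀.succ_lt hηξ
              calc h i ≤ g (((ToType.mk (o := ξ₀)).symm i).1 + 1) := hFle_g _ _ (lt_add_one _)
                _ < g ξ₀ := hgstrict _ _ hsuc (lt_trans hsuc hξ₀δ)
            have := Ordinal.cof_iSup_le hH
            rw [hisup] at this
            exact this.trans (by rw [mk_toType]; exact hcnt)
          exact absurd hβcof (not_lt.2 hcofle')
    refine ⟨Big S₀ Aa, Big S₁ Bb, hBigsub _ _ hAsub, hBigsub _ _ hBsub, hdisj,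
      fun β hβ hcofβ => ⟨hstat S₀ Aa hS₀sub hS₀st hAsub
        (fun ξ h β' h1 h2 => (hABst ξ h β' h1 h2).1) β hβ hcofβ,
        hstat S₁ Bb hS₁sub hS₁st hBsub
        (fun ξ h β' h1 h2 => (hABst ξ h β' h1 h2).2) β hβ hcofβ⟩⟩
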